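/- Let $\Psi$ be a six-times continuously differentiable cumulative distribution function such that for constants $c,m,M>0$: (i) $\Psi(-x)=1-\Psi(x)$ and $|\Psi^{(j)}(x)|\leq c$ for all $x$ and $j\in[6]$; (ii) $|x|^m\Psi(x)\geq c^{-1}$ for all $x<-M$; (iii) $|x|^m|\Psi^{(j)}(x)|\leq c$ for $j\in[6]$ and all $|x|>M$. Let $\phi$ denote the standard normal density and define, for $\sigma\in(s^{-1},s)$ with $s>1$ fixed, $\mu(x,\sigma)=\log\{\int \Psi(x+\sigma e)\phi(e)\,de\}$. Then there is a constant $\tilde{c}$ such that all partial derivatives $\partial^{i+j}\mu/\partial x^i \partial\sigma^j$ with $i+j\in\{1,2,3\}$ are uniformly bounded in absolute value by $\tilde{c}$ on $\mathbb{R}\times(s^{-1},s)$. -/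

import Mathlib

open MeasureTheory Real Filter
open scoped BigOperators Topology

/-- The standard normal density. -/
noncomputable def stdGaussianPDF (e : ℝ) : ℝ :=
  Real.exp (-(e ^ 2) / 2) / Real.sqrt (2 * Real.pi)

/-- `μ(x,σ) = log ∫ Ψ(x + σe) φ(e) de`. -/
noncomputable def logMissProb (Ψ : ℝ → ℝ) (x σ : ℝ) : ℝ :=
  Real.log (∫ e, Ψ (x + σ * e) * stdGaussianPDF e)

namespace Stmt5Aux
open Set


noncomputable def gint (Ψ : ℝ → ℝ) (k a : ℕ) (x σ : ℝ) : ℝ :=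
  ∫ e, iteratedDeriv k Ψ (x + σ * e) * e ^ a * stdGaussianPDF e

lemma sqrt2pi_pos : 0 < Real.sqrt (2 * π) := Real.sqrt_pos.2 (by positivity)

lemma one_le_sqrt2pi : 1 ≤ Real.sqrt (2 * π) := by
  rw [show (1:ℝ) = Real.sqrt 1 by simp]
  exact Real.sqrt_le_sqrt (by nlinarith [Real.pi_gt_three])

lemma phi_pos (e : ℝ) : 0 < stdGaussianPDF e := by
  unfold stdGaussianPDF; positivity

lemma phi_cont : Continuous stdGaussianPDF := by
  unfold stdGaussianPDF; fun_prop

lemma phi_le (e : ℝ) : stdGaussianPDF e ≤ exp (-(e ^ 2) / 2) := by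
  unfold stdGaussianPDF
  rw [div_le_iff₀ sqrt2pi_pos]
  nlinarith [one_le_sqrt2pi, exp_pos (-(e^2)/2)]

lemma mom_le {a : ℕ} (ha : a ≤ 3) (e : ℝ) :
    |e| ^ a * stdGaussianPDF e ≤ exp 9 * exp (-(1/4) * e ^ 2) := by
  have h1 : |e| ^ a ≤ exp (3 * |e|) := by
    calc |e| ^ a ≤ (1 + |e|) ^ a := by
          apply pow_le_pow_left₀ (abs_nonneg e); linarith
      _ ≤ (1 + |e|) ^ 3 := by
          apply pow_le_pow_right₀ (by linarith [abs_nonneg e]) ha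
      _ ≤ (exp |e|) ^ 3 := by
          apply pow_le_pow_left₀ (by positivity)
          linarith [Real.add_one_le_exp |e|]
      _ = exp (3 * |e|) := by rw [← Real.exp_nat_mul]; norm_num
  calc |e| ^ a * stdGaussianPDF e ≤ exp (3 * |e|) * exp (-(e ^ 2) / 2) := by
        apply mul_le_mul h1 (phi_le e) (phi_pos e).le (exp_nonneg _)
    _ = exp (3 * |e| - e ^ 2 / 2) := by rw [← Real.exp_add]; ring_nf
    _ ≤ exp (9 + -(1/4) * e ^ 2) := by
        apply Real.exp_le_exp.2
        nlinarith [sq_nonneg (|e| - 6), sq_abs e]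
    _ = exp 9 * exp (-(1/4) * e ^ 2) := by rw [Real.exp_add]

lemma int_exp_quarter : Integrable (fun e : ℝ => exp (-(1/4) * e ^ 2)) :=
  integrable_exp_neg_mul_sq (by norm_num)

lemma int_exp_eighth : Integrable (fun e : ℝ => exp (-(1/8) * e ^ 2)) :=
  integrable_exp_neg_mul_sq (by norm_num)

lemma int_mom {a : ℕ} (ha : a ≤ 3) :
    Integrable (fun e : ℝ => |e| ^ a * stdGaussianPDF e) := by
  apply Integrable.mono' (int_exp_quarter.const_mul (exp 9))
  · exact ((continuous_abs.pow a).mul phi_cont).aestronglyMeasurable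
  · refine ae_of_all _ fun e => ?_
    rw [Real.norm_eq_abs, abs_of_nonneg (mul_nonneg (by positivity) (phi_pos e).le)]
    exact mom_le ha e

/-- integrability of the basic integrand -/
lemma int_integrand {f : ℝ → ℝ} (hf : Continuous f) {C : ℝ} (hC : ∀ t, |f t| ≤ C)
    {a : ℕ} (ha : a ≤ 3) (x σ : ℝ) :
    Integrable (fun e : ℝ => f (x + σ * e) * e ^ a * stdGaussianPDF e) := by
  apply Integrable.mono' ((int_mom ha).const_mul C)
  · exact (((hf.comp (by continuity)).mul (continuous_pow a)).mul phi_cont).aestronglyMeasurable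
  · refine ae_of_all _ fun e => ?_
    rw [Real.norm_eq_abs, abs_mul, abs_mul, abs_pow, abs_of_nonneg (phi_pos e).le]
    have h0 : (0:ℝ) ≤ C := le_trans (abs_nonneg _) (hC (x + σ * e))
    calc |f (x + σ * e)| * |e| ^ a * stdGaussianPDF e
        ≤ C * |e| ^ a * stdGaussianPDF e := by
          apply mul_le_mul_of_nonneg_right _ (phi_pos e).le
          exact mul_le_mul_of_nonneg_right (hC _) (by positivity)
      _ = C * (|e| ^ a * stdGaussianPDF e) := by ring




section
variable {Ψ : ℝ → ℝ}

lemma contk (hsmooth : ContDiff ℝ 6 Ψ) (k : ℕ) (hk : k ≤ 6) :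
    Continuous (iteratedDeriv k Ψ) :=
  hsmooth.continuous_iteratedDeriv k (by exact_mod_cast hk)

lemma hasDeriv_iter (hsmooth : ContDiff ℝ 6 Ψ) (k : ℕ) (hk : k < 6) (t : ℝ) :
    HasDerivAt (iteratedDeriv k Ψ) (iteratedDeriv (k + 1) Ψ t) t := by
  rw [iteratedDeriv_succ]
  exact ((hsmooth.differentiable_iteratedDeriv k (by exact_mod_cast hk)) t).hasDerivAt

lemma integrand_bound {cb : ℝ} (hb : ∀ j, j ≤ 6 → ∀ t, |iteratedDeriv j Ψ t| ≤ cb)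
    {j : ℕ} (hj : j ≤ 6) (a : ℕ) (u e : ℝ) :
    ‖iteratedDeriv j Ψ u * e ^ a * stdGaussianPDF e‖ ≤ cb * (|e| ^ a * stdGaussianPDF e) := by
  rw [Real.norm_eq_abs, abs_mul, abs_mul, abs_pow, abs_of_nonneg (phi_pos e).le]
  have := hb j hj u
  nlinarith [abs_nonneg (iteratedDeriv j Ψ u), pow_nonneg (abs_nonneg e) a,
    (phi_pos e).le, mul_le_mul_of_nonneg_right this (pow_nonneg (abs_nonneg e) a),
    mul_le_mul_of_nonneg_right
      (mul_le_mul_of_nonneg_right this (pow_nonneg (abs_nonneg e) a)) (phi_pos e).le]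

lemma hasDerivX (hsmooth : ContDiff ℝ 6 Ψ) {cb : ℝ}
    (hb : ∀ j, j ≤ 6 → ∀ t, |iteratedDeriv j Ψ t| ≤ cb)
    {k a : ℕ} (hk : k < 6) (ha : a ≤ 3) (σ x : ℝ) :
    HasDerivAt (fun y => gint Ψ k a y σ) (gint Ψ (k + 1) a x σ) x := by
  have key := hasDerivAt_integral_of_dominated_loc_of_deriv_le (μ := volume) (x₀ := x)
    (F := fun y e => iteratedDeriv k Ψ (y + σ * e) * e ^ a * stdGaussianPDF e)
    (F' := fun y e => iteratedDeriv (k + 1) Ψ (y + σ * e) * e ^ a * stdGaussianPDF e)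
    (bound := fun e => cb * (|e| ^ a * stdGaussianPDF e)) Filter.univ_mem
    (Eventually.of_forall fun y =>
      ((((contk hsmooth k hk.le).comp (by continuity)).mul (continuous_pow a)).mul
        phi_cont).aestronglyMeasurable)
    (int_integrand (contk hsmooth k hk.le) (fun t => hb k hk.le t) ha x σ)
    ((((contk hsmooth (k+1) hk).comp (by continuity)).mul (continuous_pow a)).mul
        phi_cont).aestronglyMeasurable
    (ae_of_all _ fun e y _ => integrand_bound hb hk (a := a) (y + σ * e) e)
    ((int_mom ha).const_mul cb)
    (ae_of_all _ fun e y _ => by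
      have h1 : HasDerivAt (fun y : ℝ => y + σ * e) 1 y := by
        simpa using (hasDerivAt_id y).add_const (σ * e)
      have h2 := (hasDeriv_iter hsmooth k hk (y + σ * e)).comp y h1
      have h3 := (h2.mul_const (e ^ a)).mul_const (stdGaussianPDF e)
      exact h3.congr_deriv (by ring))
  exact key.2

lemma hasDerivS (hsmooth : ContDiff ℝ 6 Ψ) {cb : ℝ}
    (hb : ∀ j, j ≤ 6 → ∀ t, |iteratedDeriv j Ψ t| ≤ cb)
    {k a : ℕ} (hk : k < 6) (ha : a ≤ 2) (x σ : ℝ) :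
    HasDerivAt (fun τ => gint Ψ k a x τ) (gint Ψ (k + 1) (a + 1) x σ) σ := by
  have key := hasDerivAt_integral_of_dominated_loc_of_deriv_le (μ := volume) (x₀ := σ)
    (F := fun τ e => iteratedDeriv k Ψ (x + τ * e) * e ^ a * stdGaussianPDF e)
    (F' := fun τ e => iteratedDeriv (k + 1) Ψ (x + τ * e) * e ^ (a + 1) * stdGaussianPDF e)
    (bound := fun e => cb * (|e| ^ (a + 1) * stdGaussianPDF e)) Filter.univ_mem
    (Eventually.of_forall fun τ =>
      ((((contk hsmooth k hk.le).comp (by continuity)).mul (continuous_pow a)).mul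
        phi_cont).aestronglyMeasurable)
    (int_integrand (contk hsmooth k hk.le) (fun t => hb k hk.le t)
        (a := a) (le_trans ha (by norm_num)) x σ)
    ((((contk hsmooth (k+1) hk).comp (by continuity)).mul (continuous_pow (a+1))).mul
        phi_cont).aestronglyMeasurable
    (ae_of_all _ fun e τ _ => integrand_bound hb hk (a := a + 1) (x + τ * e) e)
    ((int_mom (by omega : a + 1 ≤ 3)).const_mul cb)
    (ae_of_all _ fun e τ _ => by
      have h1 : HasDerivAt (fun τ : ℝ => x + τ * e) e τ := by
        simpa using ((hasDerivAt_id τ).mul_const e).const_add x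
      have h2 := (hasDeriv_iter hsmooth k hk (x + τ * e)).comp τ h1
      have h3 := (h2.mul_const (e ^ a)).mul_const (stdGaussianPDF e)
      exact h3.congr_deriv (by ring))
  exact key.2
end




lemma phi_Ici : ∫ e in Ici (0:ℝ), stdGaussianPDF e = 1 / 2 := by
  rw [integral_Ici_eq_integral_Ioi]
  have h1 : ∀ e : ℝ, stdGaussianPDF e = exp (-(1/2) * e ^ 2) / Real.sqrt (2 * π) := by
    intro e; unfold stdGaussianPDF; ring_nf
  simp_rw [h1, integral_div, integral_gaussian_Ioi]
  rw [show π / (1/2) = 2 * π by ring]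
  field_simp

/-- the gaussian smoothing of Ψ is at least Ψ x / 2 -/
lemma g_lb_half {Ψ : ℝ → ℝ} (hcont : Continuous Ψ) (hmono : Monotone Ψ)
    (hΨ0 : ∀ t, 0 ≤ Ψ t) (hΨ1 : ∀ t, Ψ t ≤ 1) (x σ : ℝ) (hσ : 0 < σ) :
    Ψ x * (1 / 2) ≤ gint Ψ 0 0 x σ := by
  have habs : ∀ t, |Ψ t| ≤ 1 := fun t => abs_le.2 ⟨by linarith [hΨ0 t], hΨ1 t⟩
  have hG : Integrable (fun e => Ψ (x + σ * e) * stdGaussianPDF e) := by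
    have := int_integrand hcont habs (a := 0) (by norm_num) x σ
    simpa using this
  have hgeq : gint Ψ 0 0 x σ = ∫ e, Ψ (x + σ * e) * stdGaussianPDF e := by
    unfold gint; simp
  rw [hgeq]
  have step1 : ∫ e in Ici (0:ℝ), Ψ (x + σ * e) * stdGaussianPDF e
      ≤ ∫ e, Ψ (x + σ * e) * stdGaussianPDF e :=
    setIntegral_le_integral hG (ae_of_all _ fun e => mul_nonneg (hΨ0 _) (phi_pos e).le)
  have hφ : Integrable stdGaussianPDF := by
    have := int_mom (a := 0) (by norm_num); simpa using this
  have step2 : ∫ e in Ici (0:ℝ), Ψ x * stdGaussianPDF e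
      ≤ ∫ e in Ici (0:ℝ), Ψ (x + σ * e) * stdGaussianPDF e := by
    apply setIntegral_mono_on (hf := (hφ.const_mul (Ψ x)).integrableOn)
      (hg := hG.integrableOn) measurableSet_Ici
    intro e he
    apply mul_le_mul_of_nonneg_right _ (phi_pos e).le
    apply hmono
    have : 0 ≤ σ * e := mul_nonneg hσ.le he
    linarith
  have step3 : ∫ e in Ici (0:ℝ), Ψ x * stdGaussianPDF e = Ψ x * (1 / 2) := by
    rw [integral_const_mul, phi_Ici]
  linarith

lemma Psi_lb {Ψ : ℝ → ℝ} {c m M : ℝ} (hc : 0 < c) (hm : 0 < m) (hM : 0 < M)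
    (hmono : Monotone Ψ)
    (htail_lb : ∀ x : ℝ, x < -M → c⁻¹ ≤ |x| ^ m * Ψ x) (x : ℝ) :
    c⁻¹ * (max (M + 1) |x|) ^ (-m) ≤ Ψ x := by
  have hA : (0:ℝ) < max (M + 1) |x| := lt_max_iff.2 (Or.inl (by linarith))
  have hcinv : (0:ℝ) < c⁻¹ := inv_pos.2 hc
  rcases le_or_gt (-(M + 1)) x with hx | hx
  · have h1 := htail_lb (-(M + 1)) (by linarith)
    rw [abs_neg, abs_of_pos (by linarith : (0:ℝ) < M + 1)] at h1
    have hMp : (0:ℝ) < (M + 1) ^ m := rpow_pos_of_pos (by linarith) m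
    have h2 : c⁻¹ * ((M + 1) ^ m)⁻¹ ≤ Ψ (-(M + 1)) := by
      rw [← div_eq_mul_inv, div_le_iff₀ hMp]
      linarith [h1]
    have h3 : (max (M + 1) |x|) ^ (-m) ≤ (M + 1) ^ (-m) :=
      rpow_le_rpow_of_nonpos (by linarith) (le_max_left _ _) (by linarith)
    rw [rpow_neg (by linarith : (0:ℝ) ≤ M + 1)] at h3
    calc c⁻¹ * (max (M + 1) |x|) ^ (-m) ≤ c⁻¹ * ((M + 1) ^ m)⁻¹ :=
          mul_le_mul_of_nonneg_left h3 hcinv.le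
      _ ≤ Ψ (-(M + 1)) := h2
      _ ≤ Ψ x := hmono hx
  · have hxabs : M + 1 < |x| := by rw [abs_of_neg (by linarith)]; linarith
    have hmax : max (M + 1) |x| = |x| := max_eq_right hxabs.le
    have h1 := htail_lb x (by linarith)
    have hxp : (0:ℝ) < |x| ^ m := rpow_pos_of_pos (by linarith) m
    rw [hmax, rpow_neg (by positivity : (0:ℝ) ≤ |x|), ← div_eq_mul_inv, div_le_iff₀ hxp]
    linarith [h1]

lemma g_lb {Ψ : ℝ → ℝ} {c m M : ℝ} (hc : 0 < c) (hm : 0 < m) (hM : 0 < M)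
    (hcont : Continuous Ψ) (hmono : Monotone Ψ)
    (hΨ0 : ∀ t, 0 ≤ Ψ t) (hΨ1 : ∀ t, Ψ t ≤ 1)
    (htail_lb : ∀ x : ℝ, x < -M → c⁻¹ ≤ |x| ^ m * Ψ x)
    (x σ : ℝ) (hσ : 0 < σ) :
    c⁻¹ / 2 * (max (M + 1) |x|) ^ (-m) ≤ gint Ψ 0 0 x σ := by
  have h1 := g_lb_half hcont hmono hΨ0 hΨ1 x σ hσ
  have h2 := Psi_lb hc hm hM hmono htail_lb x
  have h3 : c⁻¹ / 2 * (max (M + 1) |x|) ^ (-m)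
      = (c⁻¹ * (max (M + 1) |x|) ^ (-m)) * (1/2) := by ring
  rw [h3]
  calc (c⁻¹ * (max (M + 1) |x|) ^ (-m)) * (1/2) ≤ Ψ x * (1/2) :=
        mul_le_mul_of_nonneg_right h2 (by norm_num)
    _ ≤ gint Ψ 0 0 x σ := h1

lemma exp_tail {m T : ℝ} (hm : 0 < m) (hT : 1 ≤ T) :
    exp (-(1/8) * T ^ 2) ≤ exp (2 * m ^ 2) * T ^ (-m) := by
  have hT0 : (0:ℝ) < T := by linarith
  have hTm : (0:ℝ) < T ^ m := rpow_pos_of_pos hT0 m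
  have h1 : T ^ m ≤ exp (m * T) := by
    rw [rpow_def_of_pos hT0]
    apply Real.exp_le_exp.2
    have := Real.log_le_sub_one_of_pos hT0
    nlinarith [Real.log_nonneg hT]
  have key : exp (-(1/8) * T ^ 2) * T ^ m ≤ exp (2 * m ^ 2) := by
    calc exp (-(1/8) * T ^ 2) * T ^ m ≤ exp (-(1/8) * T ^ 2) * exp (m * T) :=
          mul_le_mul_of_nonneg_left h1 (exp_pos _).le
      _ = exp (m * T - (1/8) * T ^ 2) := by rw [← Real.exp_add]; ring_nf
      _ ≤ exp (2 * m ^ 2) := by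
          apply Real.exp_le_exp.2
          nlinarith [sq_nonneg (T - 4 * m)]
  rw [rpow_neg hT0.le, ← div_eq_mul_inv, le_div_iff₀ hTm]
  exact key

lemma sqrt_pi_quarter : Real.sqrt (π / (1/4)) ≤ 4 := by
  have h : √(π / (1/4)) ≤ √16 := Real.sqrt_le_sqrt (by nlinarith [Real.pi_le_four])
  rwa [show (16:ℝ) = 4 ^ 2 by norm_num, Real.sqrt_sq (by norm_num : (0:ℝ) ≤ 4)] at h

lemma sqrt_pi_eighth : Real.sqrt (π / (1/8)) ≤ 8 := by
  have h : √(π / (1/8)) ≤ √64 := Real.sqrt_le_sqrt (by nlinarith [Real.pi_le_four])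
  rwa [show (64:ℝ) = 8 ^ 2 by norm_num, Real.sqrt_sq (by norm_num : (0:ℝ) ≤ 8)] at h


lemma integral_exp_quarter_le : ∫ e : ℝ, exp (-(1/4) * e ^ 2) ≤ 4 := by
  rw [integral_gaussian]; exact sqrt_pi_quarter

lemma integral_exp_eighth_le : ∫ e : ℝ, exp (-(1/8) * e ^ 2) ≤ 8 := by
  rw [integral_gaussian]; exact sqrt_pi_eighth

set_option maxHeartbeats 1000000 in
lemma I_ub {Ψ : ℝ → ℝ} {c m M s : ℝ} (hc : 0 < c) (hm : 0 < m) (hM : 0 < M) (hs : 1 < s)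
    (hsmooth : ContDiff ℝ 6 Ψ)
    (hder_bd : ∀ j ∈ Finset.Icc 1 6, ∀ x : ℝ, |iteratedDeriv j Ψ x| ≤ c)
    (htail_der : ∀ j ∈ Finset.Icc 1 6, ∀ x : ℝ, M < |x| → |x| ^ m * |iteratedDeriv j Ψ x| ≤ c)
    {k a : ℕ} (hk1 : 1 ≤ k) (hk6 : k ≤ 6) (ha : a ≤ 3) (x σ : ℝ)
    (hσ0 : 0 < σ) (hσs : σ ≤ s) :
    |gint Ψ k a x σ| ≤ (c * exp 9 * (4 * (2*(M+1)+2*s) ^ m + 4 * 2 ^ m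
      + 8 * exp (2*m^2) * (2*s) ^ m)) * (max (M + 1) |x|) ^ (-m) := by
  set K₀ : ℝ := 2*(M+1)+2*s with hK₀
  set A : ℝ := max (M + 1) |x| with hA
  have hApos : (0:ℝ) < A := lt_max_iff.2 (Or.inl (by linarith))
  have hkmem : k ∈ Finset.Icc 1 6 := Finset.mem_Icc.2 ⟨hk1, hk6⟩
  have hbd : ∀ t, |iteratedDeriv k Ψ t| ≤ c := hder_bd k hkmem
  set f : ℝ → ℝ := fun e => iteratedDeriv k Ψ (x + σ * e) * e ^ a * stdGaussianPDF e with hf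
  have hint : Integrable f := int_integrand (contk hsmooth k hk6) hbd ha x σ
  have hgf : gint Ψ k a x σ = ∫ e, f e := rfl
  have habs : |gint Ψ k a x σ| ≤ ∫ e, |f e| := by
    rw [hgf]
    simpa [Real.norm_eq_abs] using norm_integral_le_integral_norm f
  have hpt : ∀ e, |f e| ≤ c * (|e| ^ a * stdGaussianPDF e) := by
    intro e
    rw [hf]
    simp only
    rw [abs_mul, abs_mul, abs_pow, abs_of_nonneg (phi_pos e).le]
    have h1 : (0:ℝ) ≤ |e| ^ a := by positivity
    calc |iteratedDeriv k Ψ (x + σ * e)| * |e| ^ a * stdGaussianPDF e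
        ≤ c * |e| ^ a * stdGaussianPDF e := by
          apply mul_le_mul_of_nonneg_right _ (phi_pos e).le
          exact mul_le_mul_of_nonneg_right (hbd _) h1
      _ = c * (|e| ^ a * stdGaussianPDF e) := by ring
  have hpt2 : ∀ e, |f e| ≤ (c * exp 9) * exp (-(1/4) * e ^ 2) := by
    intro e
    calc |f e| ≤ c * (|e| ^ a * stdGaussianPDF e) := hpt e
      _ ≤ c * (exp 9 * exp (-(1/4) * e ^ 2)) :=
          mul_le_mul_of_nonneg_left (mom_le ha e) hc.le
      _ = (c * exp 9) * exp (-(1/4) * e ^ 2) := by ring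
  set CU : ℝ := c * exp 9 * (4 * K₀ ^ m + 4 * 2 ^ m + 8 * exp (2*m^2) * (2*s) ^ m) with hCU
  have hK₀pos : (0:ℝ) < K₀ := by positivity
  have hterm1 : (0:ℝ) ≤ 4 * K₀ ^ m := by positivity
  have hterm2 : (0:ℝ) ≤ 4 * 2 ^ m := by positivity
  have hterm3 : (0:ℝ) ≤ 8 * exp (2*m^2) * (2*s) ^ m := by positivity
  rcases le_or_gt |x| K₀ with hx | hx
  · -- small x case
    have h1 : ∫ e, |f e| ≤ (c * exp 9) * 4 := by
      calc ∫ e, |f e| ≤ ∫ e, (c * exp 9) * exp (-(1/4) * e ^ 2) :=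
            integral_mono hint.abs (int_exp_quarter.const_mul _) hpt2
        _ = (c * exp 9) * ∫ e, exp (-(1/4) * e ^ 2) := integral_const_mul _ _
        _ ≤ (c * exp 9) * 4 :=
            mul_le_mul_of_nonneg_left integral_exp_quarter_le (by positivity)
    have hAK : A ≤ K₀ := max_le (by linarith) hx
    have hKm : K₀ ^ (-m) ≤ A ^ (-m) := rpow_le_rpow_of_nonpos hApos hAK (by linarith)
    have hKK : K₀ ^ m * K₀ ^ (-m) = 1 := by
      rw [rpow_neg hK₀pos.le]
      exact mul_inv_cancel₀ (rpow_pos_of_pos hK₀pos m).ne'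
    have h2 : (c * exp 9) * 4 ≤ CU * A ^ (-m) := by
      have hAmpos : (0:ℝ) < A ^ (-m) := rpow_pos_of_pos hApos _
      have e1 : (c * exp 9) * 4 = c * exp 9 * (4 * K₀ ^ m) * K₀ ^ (-m) := by
        rw [show c * exp 9 * (4 * K₀ ^ m) * K₀ ^ (-m)
          = c * exp 9 * 4 * (K₀ ^ m * K₀ ^ (-m)) by ring, hKK]; ring
      rw [e1]
      calc c * exp 9 * (4 * K₀ ^ m) * K₀ ^ (-m) ≤ CU * K₀ ^ (-m) := by
            apply mul_le_mul_of_nonneg_right _ (rpow_pos_of_pos hK₀pos _).le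
            rw [hCU]
            have hnn : 0 ≤ c * exp 9 * (4 * 2 ^ m) + c * exp 9 * (8 * exp (2*m^2) * (2*s) ^ m) := by
              positivity
            have hre : c * exp 9 * (4 * K₀ ^ m)
                + (c * exp 9 * (4 * 2 ^ m) + c * exp 9 * (8 * exp (2*m^2) * (2*s) ^ m))
                = c * exp 9 * (4 * K₀ ^ m + 4 * 2 ^ m + 8 * exp (2*m^2) * (2*s) ^ m) := by
              ring
            linarith
        _ ≤ CU * A ^ (-m) := by
            apply mul_le_mul_of_nonneg_left hKm
            positivity
      
    linarith [habs, h1, h2]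
  · -- tail case
    have hAx : A = |x| := max_eq_right (by linarith)
    have hxpos : (0:ℝ) < |x| := by linarith
    set T : ℝ := |x| / (2 * s) with hT
    have hs0 : (0:ℝ) < s := by linarith
    have hT1 : 1 ≤ T := by
      rw [hT, le_div_iff₀ (by linarith)]
      linarith
    have hT0 : (0:ℝ) < T := by linarith
    have hsplit : ∫ e, |f e| = (∫ e in Ioo (-T) T, |f e|) + ∫ e in (Ioo (-T) T)ᶜ, |f e| :=
      (integral_add_compl measurableSet_Ioo hint.abs).symm
    -- bound on S
    have hSpt : ∀ e ∈ Ioo (-T) T, |f e| ≤ (c * (|x|/2) ^ (-m) * exp 9) * exp (-(1/4) * e ^ 2) := by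
      intro e he
      have heT : |e| ≤ T := by
        rw [abs_le]; exact ⟨he.1.le, he.2.le⟩
      have hσe : |σ * e| ≤ |x| / 2 := by
        rw [abs_mul, abs_of_pos hσ0]
        calc σ * |e| ≤ s * T := by
              apply mul_le_mul hσs heT (abs_nonneg e) hs0.le
          _ = |x| / 2 := by rw [hT]; field_simp
      have hxe2 : |x| / 2 ≤ |x + σ * e| := by
        have := abs_sub_abs_le_abs_sub x (-(σ * e))
        have h' : |x - -(σ * e)| = |x + σ * e| := by ring_nf
        rw [h'] at this
        rw [abs_neg] at this
        linarith
      have hgtM : M < |x + σ * e| := by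
        have : M + 1 < |x| / 2 := by rw [hK₀] at hx; linarith
        linarith
      have hΨk : |iteratedDeriv k Ψ (x + σ * e)| ≤ c * (|x|/2) ^ (-m) := by
        have h1 := htail_der k hkmem (x + σ * e) hgtM
        have hy : (0:ℝ) < |x + σ * e| := by linarith [hgtM, hM]
        have hym : (0:ℝ) < |x + σ * e| ^ m := rpow_pos_of_pos hy m
        have h2 : |iteratedDeriv k Ψ (x + σ * e)| ≤ c * (|x + σ * e| ^ m)⁻¹ := by
          rw [← div_eq_mul_inv, le_div_iff₀ hym]
          linarith [h1]
        have h3 : (|x + σ * e|) ^ (-m) ≤ (|x|/2) ^ (-m) :=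
          rpow_le_rpow_of_nonpos (by positivity) hxe2 (by linarith)
        rw [rpow_neg hy.le] at h3
        calc |iteratedDeriv k Ψ (x + σ * e)| ≤ c * (|x + σ * e| ^ m)⁻¹ := h2
          _ ≤ c * (|x|/2) ^ (-m) := mul_le_mul_of_nonneg_left h3 hc.le
      calc |f e| ≤ |iteratedDeriv k Ψ (x + σ * e)| * (|e| ^ a * stdGaussianPDF e) := by
            rw [hf]; simp only
            rw [abs_mul, abs_mul, abs_pow, abs_of_nonneg (phi_pos e).le]
            apply le_of_eq; ring
        _ ≤ (c * (|x|/2) ^ (-m)) * (|e| ^ a * stdGaussianPDF e) := by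
            apply mul_le_mul_of_nonneg_right hΨk
              (mul_nonneg (by positivity) (phi_pos e).le)
        _ ≤ (c * (|x|/2) ^ (-m)) * (exp 9 * exp (-(1/4) * e ^ 2)) := by
            apply mul_le_mul_of_nonneg_left (mom_le ha e) (by positivity)
        _ = (c * (|x|/2) ^ (-m) * exp 9) * exp (-(1/4) * e ^ 2) := by ring
    have hS : ∫ e in Ioo (-T) T, |f e| ≤ (c * (|x|/2) ^ (-m) * exp 9) * 4 := by
      calc ∫ e in Ioo (-T) T, |f e|
          ≤ ∫ e in Ioo (-T) T, (c * (|x|/2) ^ (-m) * exp 9) * exp (-(1/4) * e ^ 2) :=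
            setIntegral_mono_on (hf := hint.abs.integrableOn)
              (hg := (int_exp_quarter.const_mul _).integrableOn) measurableSet_Ioo hSpt
        _ ≤ ∫ e, (c * (|x|/2) ^ (-m) * exp 9) * exp (-(1/4) * e ^ 2) :=
            setIntegral_le_integral (int_exp_quarter.const_mul _)
              (ae_of_all _ fun e => by positivity)
        _ = (c * (|x|/2) ^ (-m) * exp 9) * ∫ e, exp (-(1/4) * e ^ 2) := integral_const_mul _ _
        _ ≤ (c * (|x|/2) ^ (-m) * exp 9) * 4 :=
            mul_le_mul_of_nonneg_left integral_exp_quarter_le (by positivity)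
    -- bound on complement
    have hCpt : ∀ e ∈ (Ioo (-T) T)ᶜ,
        |f e| ≤ ((c * exp 9) * exp (-(1/8) * T ^ 2)) * exp (-(1/8) * e ^ 2) := by
      intro e he
      have heT : T ≤ |e| := by
        simp only [Set.mem_compl_iff, Set.mem_Ioo, not_and_or, not_lt] at he
        rcases he with h | h
        · rw [abs_of_nonpos (by linarith)]; linarith
        · rw [abs_of_pos (by linarith)]; exact h
      have hsq : T ^ 2 ≤ e ^ 2 := by
        rw [← sq_abs e]
        exact pow_le_pow_left₀ hT0.le heT 2
      calc |f e| ≤ (c * exp 9) * exp (-(1/4) * e ^ 2) := hpt2 e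
        _ = (c * exp 9) * (exp (-(1/8) * e ^ 2) * exp (-(1/8) * e ^ 2)) := by
            rw [← Real.exp_add]; ring_nf
        _ ≤ (c * exp 9) * (exp (-(1/8) * T ^ 2) * exp (-(1/8) * e ^ 2)) := by
            apply mul_le_mul_of_nonneg_left _ (by positivity)
            apply mul_le_mul_of_nonneg_right _ (exp_pos _).le
            apply Real.exp_le_exp.2
            linarith
        _ = ((c * exp 9) * exp (-(1/8) * T ^ 2)) * exp (-(1/8) * e ^ 2) := by ring
    have hC : ∫ e in (Ioo (-T) T)ᶜ, |f e| ≤ ((c * exp 9) * exp (-(1/8) * T ^ 2)) * 8 := by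
      calc ∫ e in (Ioo (-T) T)ᶜ, |f e|
          ≤ ∫ e in (Ioo (-T) T)ᶜ, ((c * exp 9) * exp (-(1/8) * T ^ 2)) * exp (-(1/8) * e ^ 2) :=
            setIntegral_mono_on (hf := hint.abs.integrableOn)
              (hg := (int_exp_eighth.const_mul _).integrableOn)
              measurableSet_Ioo.compl hCpt
        _ ≤ ∫ e, ((c * exp 9) * exp (-(1/8) * T ^ 2)) * exp (-(1/8) * e ^ 2) :=
            setIntegral_le_integral (int_exp_eighth.const_mul _)
              (ae_of_all _ fun e => by positivity)
        _ = ((c * exp 9) * exp (-(1/8) * T ^ 2)) * ∫ e, exp (-(1/8) * e ^ 2) :=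
            integral_const_mul _ _
        _ ≤ ((c * exp 9) * exp (-(1/8) * T ^ 2)) * 8 :=
            mul_le_mul_of_nonneg_left integral_exp_eighth_le (by positivity)
    -- convert to powers of |x|
    have hhalf : (|x|/2) ^ (-m) = 2 ^ m * |x| ^ (-m) := by
      rw [div_rpow (abs_nonneg x) (by norm_num : (0:ℝ) ≤ 2),
        Real.rpow_neg (abs_nonneg x), Real.rpow_neg (by norm_num : (0:ℝ) ≤ 2)]
      field_simp
    have hTm : T ^ (-m) = (2*s) ^ m * |x| ^ (-m) := by
      rw [hT, div_rpow (abs_nonneg x) (by positivity : (0:ℝ) ≤ 2*s),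
        Real.rpow_neg (abs_nonneg x), Real.rpow_neg (by positivity : (0:ℝ) ≤ 2*s)]
      field_simp
    have hexpT : exp (-(1/8) * T ^ 2) ≤ exp (2*m^2) * T ^ (-m) := exp_tail hm hT1
    have hxm : (0:ℝ) < |x| ^ (-m) := rpow_pos_of_pos hxpos _
    have htotal : ∫ e, |f e| ≤
        (c * exp 9 * (4 * 2 ^ m + 8 * exp (2*m^2) * (2*s) ^ m)) * |x| ^ (-m) := by
      rw [hsplit]
      have hS' : ∫ e in Ioo (-T) T, |f e| ≤ (c * exp 9 * (4 * 2 ^ m)) * |x| ^ (-m) := by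
        calc ∫ e in Ioo (-T) T, |f e| ≤ (c * (|x|/2) ^ (-m) * exp 9) * 4 := hS
          _ = (c * exp 9 * (4 * 2 ^ m)) * |x| ^ (-m) := by rw [hhalf]; ring
      have hC' : ∫ e in (Ioo (-T) T)ᶜ, |f e|
          ≤ (c * exp 9 * (8 * exp (2*m^2) * (2*s) ^ m)) * |x| ^ (-m) := by
        calc ∫ e in (Ioo (-T) T)ᶜ, |f e| ≤ ((c * exp 9) * exp (-(1/8) * T ^ 2)) * 8 := hC
          _ ≤ ((c * exp 9) * (exp (2*m^2) * T ^ (-m))) * 8 := by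
              apply mul_le_mul_of_nonneg_right _ (by norm_num)
              exact mul_le_mul_of_nonneg_left hexpT (by positivity)
          _ = (c * exp 9 * (8 * exp (2*m^2) * (2*s) ^ m)) * |x| ^ (-m) := by
              rw [hTm]; ring
      linarith
    have hfinal : (c * exp 9 * (4 * 2 ^ m + 8 * exp (2*m^2) * (2*s) ^ m)) * |x| ^ (-m)
        ≤ CU * A ^ (-m) := by
      rw [hAx]
      have hcoef : c * exp 9 * (4 * 2 ^ m + 8 * exp (2*m^2) * (2*s) ^ m) ≤ CU := by
        rw [hCU]
        have hnn : 0 ≤ c * exp 9 * (4 * K₀ ^ m) := by positivity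
        have hre : c * exp 9 * (4 * 2 ^ m + 8 * exp (2*m^2) * (2*s) ^ m)
            + c * exp 9 * (4 * K₀ ^ m)
            = c * exp 9 * (4 * K₀ ^ m + 4 * 2 ^ m + 8 * exp (2*m^2) * (2*s) ^ m) := by ring
        linarith
      exact mul_le_mul_of_nonneg_right hcoef hxm.le
    linarith [habs, htotal, hfinal]




noncomputable def rat (Ψ : ℝ → ℝ) (k a : ℕ) (x σ : ℝ) : ℝ :=
  gint Ψ k a x σ / gint Ψ 0 0 x σ

lemma lmp_eq (Ψ : ℝ → ℝ) (x σ : ℝ) : logMissProb Ψ x σ = Real.log (gint Ψ 0 0 x σ) := by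
  unfold logMissProb gint
  simp

lemma iteratedDeriv_congr_ev {f g : ℝ → ℝ} {x : ℝ} (h : f =ᶠ[𝓝 x] g) (n : ℕ) :
    iteratedDeriv n f =ᶠ[𝓝 x] iteratedDeriv n g := by
  induction n with
  | zero => simpa [iteratedDeriv_zero] using h
  | succ n ih => rw [iteratedDeriv_succ, iteratedDeriv_succ]; exact ih.deriv

lemma iteratedDeriv_congr_eq {f g : ℝ → ℝ} {x : ℝ} (h : f =ᶠ[𝓝 x] g) (n : ℕ) :
    iteratedDeriv n f x = iteratedDeriv n g x :=
  (iteratedDeriv_congr_ev h n).eq_of_nhds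

lemma derivChain1 {F F1 : ℝ → ℝ} {σ : ℝ} (hσ : 0 < σ)
    (h1 : ∀ τ, 0 < τ → HasDerivAt F (F1 τ) τ) :
    iteratedDeriv 1 F σ = F1 σ := by
  rw [iteratedDeriv_one]; exact (h1 σ hσ).deriv

lemma derivChain2 {F F1 F2 : ℝ → ℝ} {σ : ℝ} (hσ : 0 < σ)
    (h1 : ∀ τ, 0 < τ → HasDerivAt F (F1 τ) τ)
    (h2 : ∀ τ, 0 < τ → HasDerivAt F1 (F2 τ) τ) :
    iteratedDeriv 2 F σ = F2 σ := by
  have hev : deriv F =ᶠ[𝓝 σ] F1 :=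
    eventuallyEq_of_mem (Ioi_mem_nhds hσ) fun τ hτ => (h1 τ hτ).deriv
  rw [show (2:ℕ) = 1 + 1 from rfl, iteratedDeriv_succ, iteratedDeriv_one, hev.deriv_eq]
  exact (h2 σ hσ).deriv

lemma derivChain3 {F F1 F2 F3 : ℝ → ℝ} {σ : ℝ} (hσ : 0 < σ)
    (h1 : ∀ τ, 0 < τ → HasDerivAt F (F1 τ) τ)
    (h2 : ∀ τ, 0 < τ → HasDerivAt F1 (F2 τ) τ)
    (h3 : ∀ τ, 0 < τ → HasDerivAt F2 (F3 τ) τ) :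
    iteratedDeriv 3 F σ = F3 σ := by
  have hd2 : ∀ τ, 0 < τ → deriv (deriv F) τ = F2 τ := by
    intro τ hτ
    have hev : deriv F =ᶠ[𝓝 τ] F1 :=
      eventuallyEq_of_mem (Ioi_mem_nhds hτ) fun t ht => (h1 t ht).deriv
    rw [hev.deriv_eq]; exact (h2 τ hτ).deriv
  have hev2 : deriv (deriv F) =ᶠ[𝓝 σ] F2 :=
    eventuallyEq_of_mem (Ioi_mem_nhds hσ) fun t ht => hd2 t ht
  rw [show (3:ℕ) = 1 + 1 + 1 from rfl, iteratedDeriv_succ, iteratedDeriv_succ,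
    iteratedDeriv_one, hev2.deriv_eq]
  exact (h3 σ hσ).deriv

lemma babs_sub {a b A B : ℝ} (ha : |a| ≤ A) (hb : |b| ≤ B) : |a - b| ≤ A + B := by
  have h := abs_sub a b
  linarith

lemma babs_add {a b A B : ℝ} (ha : |a| ≤ A) (hb : |b| ≤ B) : |a + b| ≤ A + B := by
  have h := abs_add_le a b
  linarith

lemma babs_mul {a b A B : ℝ} (ha : |a| ≤ A) (hb : |b| ≤ B) : |a * b| ≤ A * B := by
  rw [abs_mul]
  exact mul_le_mul ha hb (abs_nonneg _) ((abs_nonneg a).trans ha)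


end Stmt5Aux

open Stmt5Aux in
set_option maxHeartbeats 2000000 in
/-- Lemma on bounded derivatives of the observed-data log-likelihood pieces:
for a six-times continuously differentiable CDF `Ψ` that is symmetric, has bounded
derivatives, a polynomially lower-bounded left tail, and polynomially decaying derivative
tails, all partial derivatives of `μ(x,σ) = log ∫ Ψ(x+σe)φ(e)de` of total order `1`, `2`
or `3` are uniformly bounded on `ℝ × (s⁻¹, s)`. Mixed partials are expressed by first
differentiating `i` times in `x` and then `j` times in `σ`. -/
theorem stmt5 (c m M s : ℝ) (hc : 0 < c) (hm : 0 < m) (hM : 0 < M) (hs : 1 < s)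
    (Ψ : ℝ → ℝ)
    (hsmooth : ContDiff ℝ 6 Ψ) (hmono : Monotone Ψ)
    (hbot : Tendsto Ψ atBot (𝓝 0)) (htop : Tendsto Ψ atTop (𝓝 1))
    (hsymm : ∀ x : ℝ, Ψ (-x) = 1 - Ψ x)
    (hder_bd : ∀ j ∈ Finset.Icc 1 6, ∀ x : ℝ, |iteratedDeriv j Ψ x| ≤ c)
    (htail_lb : ∀ x : ℝ, x < -M → c⁻¹ ≤ |x| ^ m * Ψ x)
    (htail_der : ∀ j ∈ Finset.Icc 1 6, ∀ x : ℝ, M < |x| → |x| ^ m * |iteratedDeriv j Ψ x| ≤ c) :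
    ∃ ctil : ℝ, 0 < ctil ∧
      ∀ (i j : ℕ), 1 ≤ i + j → i + j ≤ 3 →
        ∀ (x σ : ℝ), σ ∈ Set.Ioo s⁻¹ s →
          |iteratedDeriv j (fun σ' => iteratedDeriv i (fun x' => logMissProb Ψ x' σ') x) σ|
            ≤ ctil := by
  have hcont : Continuous Ψ := hsmooth.continuous
  have hΨ0 : ∀ t, 0 ≤ Ψ t := fun t => hmono.le_of_tendsto hbot t
  have hΨ1 : ∀ t, Ψ t ≤ 1 := fun t => hmono.ge_of_tendsto htop t
  have hb : ∀ j, j ≤ 6 → ∀ t, |iteratedDeriv j Ψ t| ≤ max c 1 := by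
    intro j hj t
    rcases Nat.eq_zero_or_pos j with rfl | hj1
    · rw [iteratedDeriv_zero]
      exact le_trans (abs_le.2 ⟨by linarith [hΨ0 t], hΨ1 t⟩) (le_max_right c 1)
    · exact le_trans (hder_bd j (Finset.mem_Icc.2 ⟨hj1, hj⟩) t) (le_max_left c 1)
  have gpos : ∀ x σ, 0 < σ → 0 < gint Ψ 0 0 x σ := by
    intro x σ hσ
    refine lt_of_lt_of_le ?_ (g_lb hc hm hM hcont hmono hΨ0 hΨ1 htail_lb x σ hσ)
    have h1 : (0:ℝ) < max (M + 1) |x| := lt_max_iff.2 (Or.inl (by linarith))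
    exact mul_pos (by positivity) (Real.rpow_pos_of_pos h1 (-m))
  set CU : ℝ := c * exp 9 * (4 * (2*(M+1)+2*s) ^ m + 4 * 2 ^ m
      + 8 * exp (2*m^2) * (2*s) ^ m) with hCUdef
  have hCU : 0 < CU := by
    have k1 : (0:ℝ) < (2*(M+1)+2*s) ^ m := Real.rpow_pos_of_pos (by linarith) m
    have k2 : (0:ℝ) < (2:ℝ) ^ m := Real.rpow_pos_of_pos (by norm_num) m
    have k3 : (0:ℝ) < (2*s) ^ m := Real.rpow_pos_of_pos (by linarith) m
    have k4 := exp_pos (2*m^2)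
    rw [hCUdef]
    apply mul_pos (mul_pos hc (exp_pos 9))
    nlinarith
  set B : ℝ := max (2 * c * CU) 1 with hBdef
  have hB1 : (1:ℝ) ≤ B := le_max_right _ _
  have hB0 : (0:ℝ) ≤ B := by linarith
  have hRB : ∀ k a : ℕ, 1 ≤ k → k ≤ 6 → a ≤ 3 → ∀ x σ, 0 < σ → σ ≤ s →
      |rat Ψ k a x σ| ≤ B := by
    intro k a hk1 hk6 ha x σ hσ0 hσs
    have hI := I_ub hc hm hM hs hsmooth hder_bd htail_der hk1 hk6 ha x σ hσ0 hσs
    rw [← hCUdef] at hI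
    have hg := g_lb hc hm hM hcont hmono hΨ0 hΨ1 htail_lb x σ hσ0
    have hw : (0:ℝ) < (max (M + 1) |x|) ^ (-m) :=
      Real.rpow_pos_of_pos (lt_max_iff.2 (Or.inl (by linarith))) (-m)
    have hgpos := gpos x σ hσ0
    have hco : (0:ℝ) < c⁻¹ / 2 := by positivity
    have hkey : |rat Ψ k a x σ| = |gint Ψ k a x σ| / gint Ψ 0 0 x σ := by
      rw [rat, abs_div, abs_of_pos hgpos]
    rw [hkey]
    calc |gint Ψ k a x σ| / gint Ψ 0 0 x σ
        ≤ (CU * (max (M + 1) |x|) ^ (-m)) / (c⁻¹ / 2 * (max (M + 1) |x|) ^ (-m)) :=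
          div_le_div₀ (by positivity) hI (mul_pos hco hw) hg
      _ = 2 * c * CU := by
          rw [mul_div_mul_right _ _ hw.ne']
          field_simp
      _ ≤ B := le_max_left _ _
  have hDX : ∀ (k a : ℕ), k < 6 → a ≤ 3 → ∀ x σ, 0 < σ →
      HasDerivAt (fun y => rat Ψ k a y σ)
        (rat Ψ (k+1) a x σ - rat Ψ k a x σ * rat Ψ 1 0 x σ) x := by
    intro k a hk ha x σ hσ
    have h1 := hasDerivX hsmooth hb hk ha σ x
    have h0 := hasDerivX hsmooth hb (k := 0) (a := 0) (by norm_num) (by norm_num) σ x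
    have hg := (gpos x σ hσ).ne'
    have hd := h1.div h0 hg
    have hval : (gint Ψ (k+1) a x σ * gint Ψ 0 0 x σ - gint Ψ k a x σ * gint Ψ (0+1) 0 x σ)
        / gint Ψ 0 0 x σ ^ 2
        = rat Ψ (k+1) a x σ - rat Ψ k a x σ * rat Ψ 1 0 x σ := by
      simp only [rat]
      field_simp
    exact hval ▸ hd
  have hDS : ∀ (k a : ℕ), k < 6 → a ≤ 2 → ∀ x σ, 0 < σ →
      HasDerivAt (fun τ => rat Ψ k a x τ)
        (rat Ψ (k+1) (a+1) x σ - rat Ψ k a x σ * rat Ψ 1 1 x σ) σ := by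
    intro k a hk ha x σ hσ
    have h1 := hasDerivS hsmooth hb hk ha x σ
    have h0 := hasDerivS hsmooth hb (k := 0) (a := 0) (by norm_num) (by norm_num) x σ
    have hg := (gpos x σ hσ).ne'
    have hd := h1.div h0 hg
    have hval : (gint Ψ (k+1) (a+1) x σ * gint Ψ 0 0 x σ
          - gint Ψ k a x σ * gint Ψ (0+1) (0+1) x σ)
        / gint Ψ 0 0 x σ ^ 2
        = rat Ψ (k+1) (a+1) x σ - rat Ψ k a x σ * rat Ψ 1 1 x σ := by
      simp only [rat]
      field_simp
    exact hval ▸ hd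
  have hlogX : ∀ σ, 0 < σ → ∀ x, HasDerivAt (fun y => logMissProb Ψ y σ)
      (rat Ψ 1 0 x σ) x := by
    intro σ hσ x
    have h0 := hasDerivX hsmooth hb (k := 0) (a := 0) (by norm_num) (by norm_num) σ x
    have hg := (gpos x σ hσ).ne'
    have hd := h0.log hg
    simp only [lmp_eq]
    exact hd
  have hlogS : ∀ x τ, 0 < τ → HasDerivAt (fun τ' => logMissProb Ψ x τ')
      (rat Ψ 1 1 x τ) τ := by
    intro x τ hτ
    have h0 := hasDerivS hsmooth hb (k := 0) (a := 0) (by norm_num) (by norm_num) x τ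
    have hg := (gpos x τ hτ).ne'
    have hd := h0.log hg
    simp only [lmp_eq]
    exact hd
  have hiter1 : ∀ σ, 0 < σ → iteratedDeriv 1 (fun y => logMissProb Ψ y σ)
      = fun y => rat Ψ 1 0 y σ := by
    intro σ hσ; rw [iteratedDeriv_one]; funext y; exact (hlogX σ hσ y).deriv
  have hiter2 : ∀ σ, 0 < σ → iteratedDeriv 2 (fun y => logMissProb Ψ y σ)
      = fun y => rat Ψ 2 0 y σ - rat Ψ 1 0 y σ * rat Ψ 1 0 y σ := by
    intro σ hσ
    rw [show (2:ℕ) = 1+1 from rfl, iteratedDeriv_succ, hiter1 σ hσ]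
    funext y
    exact ((hDX 1 0 (by norm_num) (by norm_num) y σ hσ)).deriv
  have hiter3 : ∀ σ, 0 < σ → iteratedDeriv 3 (fun y => logMissProb Ψ y σ)
      = fun y => (rat Ψ 3 0 y σ - rat Ψ 2 0 y σ * rat Ψ 1 0 y σ)
        - ((rat Ψ 2 0 y σ - rat Ψ 1 0 y σ * rat Ψ 1 0 y σ) * rat Ψ 1 0 y σ
           + rat Ψ 1 0 y σ * (rat Ψ 2 0 y σ - rat Ψ 1 0 y σ * rat Ψ 1 0 y σ)) := by
    intro σ hσ
    rw [show (3:ℕ) = 2+1 from rfl, iteratedDeriv_succ, hiter2 σ hσ]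
    funext y
    exact ((hDX 2 0 (by norm_num) (by norm_num) y σ hσ).sub
      ((hDX 1 0 (by norm_num) (by norm_num) y σ hσ).mul
        (hDX 1 0 (by norm_num) (by norm_num) y σ hσ))).deriv
  refine ⟨100 * B ^ 3, by nlinarith [hB1, hB0, sq_nonneg B, mul_nonneg hB0 hB0, mul_nonneg (mul_nonneg hB0 hB0) hB0], ?_⟩
  intro i j hij1 hij3 x σ hσmem
  have hσ0 : 0 < σ := lt_trans (inv_pos.2 (by linarith)) hσmem.1
  have hσs : σ ≤ s := hσmem.2.le
  have h10 := hRB 1 0 (by norm_num) (by norm_num) (by norm_num) x σ hσ0 hσs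
  have h11 := hRB 1 1 (by norm_num) (by norm_num) (by norm_num) x σ hσ0 hσs
  have h20 := hRB 2 0 (by norm_num) (by norm_num) (by norm_num) x σ hσ0 hσs
  have h21 := hRB 2 1 (by norm_num) (by norm_num) (by norm_num) x σ hσ0 hσs
  have h22 := hRB 2 2 (by norm_num) (by norm_num) (by norm_num) x σ hσ0 hσs
  have h30 := hRB 3 0 (by norm_num) (by norm_num) (by norm_num) x σ hσ0 hσs
  have h31 := hRB 3 1 (by norm_num) (by norm_num) (by norm_num) x σ hσ0 hσs
  have h32 := hRB 3 2 (by norm_num) (by norm_num) (by norm_num) x σ hσ0 hσs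
  have h33 := hRB 3 3 (by norm_num) (by norm_num) (by norm_num) x σ hσ0 hσs
  have hA3 : (0:ℝ) ≤ B ^ 3 := by positivity
  have hA1 : B ≤ B ^ 3 := by
    nlinarith [mul_nonneg (mul_nonneg (by linarith : (0:ℝ) ≤ B - 1) hB0)
      (by linarith : (0:ℝ) ≤ B + 1)]
  have hA2 : B * B ≤ B ^ 3 := by
    nlinarith [mul_nonneg (mul_nonneg (by linarith : (0:ℝ) ≤ B - 1) hB0) hB0]
  have e0 : (fun σ' => iteratedDeriv 0 (fun x' => logMissProb Ψ x' σ') x)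
      = fun σ' => logMissProb Ψ x σ' := by
    funext σ'; rw [iteratedDeriv_zero]
  have hi3 : i ≤ 3 := by omega
  have hj3 : j ≤ 3 := by omega
  interval_cases i <;> interval_cases j <;> try omega
  · -- (0,1)
    rw [e0, derivChain1 hσ0 (fun τ hτ => hlogS x τ hτ)]
    exact le_trans h11 (by nlinarith [hA1, hA3])
  · -- (0,2)
    rw [e0, derivChain2 hσ0 (fun τ hτ => hlogS x τ hτ)
      (fun τ hτ => hDS 1 1 (by norm_num) (by norm_num) x τ hτ)]
    have t := babs_sub h22 (babs_mul h11 h11)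
    exact le_trans t (by nlinarith [hA1, hA2, hA3])
  · -- (0,3)
    rw [e0, derivChain3 hσ0 (fun τ hτ => hlogS x τ hτ)
      (fun τ hτ => hDS 1 1 (by norm_num) (by norm_num) x τ hτ)
      (fun τ hτ => (hDS 2 2 (by norm_num) (by norm_num) x τ hτ).sub
        ((hDS 1 1 (by norm_num) (by norm_num) x τ hτ).mul
          (hDS 1 1 (by norm_num) (by norm_num) x τ hτ)))]
    have t2 : |rat Ψ 2 2 x σ - rat Ψ 1 1 x σ * rat Ψ 1 1 x σ| ≤ B + B * B :=
      babs_sub h22 (babs_mul h11 h11)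
    have t1 : |rat Ψ 3 3 x σ - rat Ψ 2 2 x σ * rat Ψ 1 1 x σ| ≤ B + B * B :=
      babs_sub h33 (babs_mul h22 h11)
    have t := babs_sub t1 (babs_add (babs_mul t2 h11) (babs_mul h11 t2))
    exact le_trans t (by nlinarith [hA1, hA2, hA3])
  · -- (1,0)
    have e1 : (fun σ' => iteratedDeriv 1 (fun x' => logMissProb Ψ x' σ') x)
        =ᶠ[𝓝 σ] fun σ' => rat Ψ 1 0 x σ' :=
      eventuallyEq_of_mem (Ioi_mem_nhds hσ0) (fun τ hτ => congrFun (hiter1 τ hτ) x)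
    rw [iteratedDeriv_congr_eq e1 0, iteratedDeriv_zero]
    exact le_trans h10 (by nlinarith [hA1, hA3])
  · -- (1,1)
    have e1 : (fun σ' => iteratedDeriv 1 (fun x' => logMissProb Ψ x' σ') x)
        =ᶠ[𝓝 σ] fun σ' => rat Ψ 1 0 x σ' :=
      eventuallyEq_of_mem (Ioi_mem_nhds hσ0) (fun τ hτ => congrFun (hiter1 τ hτ) x)
    rw [iteratedDeriv_congr_eq e1 1,
      derivChain1 hσ0 (fun τ hτ => hDS 1 0 (by norm_num) (by norm_num) x τ hτ)]
    have t := babs_sub h21 (babs_mul h10 h11)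
    exact le_trans t (by nlinarith [hA1, hA2, hA3])
  · -- (1,2)
    have e1 : (fun σ' => iteratedDeriv 1 (fun x' => logMissProb Ψ x' σ') x)
        =ᶠ[𝓝 σ] fun σ' => rat Ψ 1 0 x σ' :=
      eventuallyEq_of_mem (Ioi_mem_nhds hσ0) (fun τ hτ => congrFun (hiter1 τ hτ) x)
    rw [iteratedDeriv_congr_eq e1 2,
      derivChain2 hσ0 (fun τ hτ => hDS 1 0 (by norm_num) (by norm_num) x τ hτ)
        (fun τ hτ => (hDS 2 1 (by norm_num) (by norm_num) x τ hτ).sub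
          ((hDS 1 0 (by norm_num) (by norm_num) x τ hτ).mul
            (hDS 1 1 (by norm_num) (by norm_num) x τ hτ)))]
    have ta : |rat Ψ 3 2 x σ - rat Ψ 2 1 x σ * rat Ψ 1 1 x σ| ≤ B + B * B :=
      babs_sub h32 (babs_mul h21 h11)
    have tb : |rat Ψ 2 1 x σ - rat Ψ 1 0 x σ * rat Ψ 1 1 x σ| ≤ B + B * B :=
      babs_sub h21 (babs_mul h10 h11)
    have tc : |rat Ψ 2 2 x σ - rat Ψ 1 1 x σ * rat Ψ 1 1 x σ| ≤ B + B * B :=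
      babs_sub h22 (babs_mul h11 h11)
    have t := babs_sub ta (babs_add (babs_mul tb h11) (babs_mul h10 tc))
    exact le_trans t (by nlinarith [hA1, hA2, hA3])
  · -- (2,0)
    have e2 : (fun σ' => iteratedDeriv 2 (fun x' => logMissProb Ψ x' σ') x)
        =ᶠ[𝓝 σ] fun σ' => rat Ψ 2 0 x σ' - rat Ψ 1 0 x σ' * rat Ψ 1 0 x σ' :=
      eventuallyEq_of_mem (Ioi_mem_nhds hσ0) (fun τ hτ => congrFun (hiter2 τ hτ) x)
    rw [iteratedDeriv_congr_eq e2 0, iteratedDeriv_zero]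
    have t := babs_sub h20 (babs_mul h10 h10)
    exact le_trans t (by nlinarith [hA1, hA2, hA3])
  · -- (2,1)
    have e2 : (fun σ' => iteratedDeriv 2 (fun x' => logMissProb Ψ x' σ') x)
        =ᶠ[𝓝 σ] fun σ' => rat Ψ 2 0 x σ' - rat Ψ 1 0 x σ' * rat Ψ 1 0 x σ' :=
      eventuallyEq_of_mem (Ioi_mem_nhds hσ0) (fun τ hτ => congrFun (hiter2 τ hτ) x)
    rw [iteratedDeriv_congr_eq e2 1,
      derivChain1 (F := fun σ' => rat Ψ 2 0 x σ' - rat Ψ 1 0 x σ' * rat Ψ 1 0 x σ') hσ0 (fun τ hτ => (hDS 2 0 (by norm_num) (by norm_num) x τ hτ).sub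
        ((hDS 1 0 (by norm_num) (by norm_num) x τ hτ).mul
          (hDS 1 0 (by norm_num) (by norm_num) x τ hτ)))]
    have ta : |rat Ψ 3 1 x σ - rat Ψ 2 0 x σ * rat Ψ 1 1 x σ| ≤ B + B * B :=
      babs_sub h31 (babs_mul h20 h11)
    have tb : |rat Ψ 2 1 x σ - rat Ψ 1 0 x σ * rat Ψ 1 1 x σ| ≤ B + B * B :=
      babs_sub h21 (babs_mul h10 h11)
    have t := babs_sub ta (babs_add (babs_mul tb h10) (babs_mul h10 tb))
    exact le_trans t (by nlinarith [hA1, hA2, hA3])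
  · -- (3,0)
    have e3 : (fun σ' => iteratedDeriv 3 (fun x' => logMissProb Ψ x' σ') x)
        =ᶠ[𝓝 σ] fun σ' => (rat Ψ 3 0 x σ' - rat Ψ 2 0 x σ' * rat Ψ 1 0 x σ')
          - ((rat Ψ 2 0 x σ' - rat Ψ 1 0 x σ' * rat Ψ 1 0 x σ') * rat Ψ 1 0 x σ'
             + rat Ψ 1 0 x σ' * (rat Ψ 2 0 x σ' - rat Ψ 1 0 x σ' * rat Ψ 1 0 x σ')) :=
      eventuallyEq_of_mem (Ioi_mem_nhds hσ0) (fun τ hτ => congrFun (hiter3 τ hτ) x)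
    rw [iteratedDeriv_congr_eq e3 0, iteratedDeriv_zero]
    have ta : |rat Ψ 3 0 x σ - rat Ψ 2 0 x σ * rat Ψ 1 0 x σ| ≤ B + B * B :=
      babs_sub h30 (babs_mul h20 h10)
    have tb : |rat Ψ 2 0 x σ - rat Ψ 1 0 x σ * rat Ψ 1 0 x σ| ≤ B + B * B :=
      babs_sub h20 (babs_mul h10 h10)
    have t := babs_sub ta (babs_add (babs_mul tb h10) (babs_mul h10 tb))
    exact le_trans t (by nlinarith [hA1, hA2, hA3])
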